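/- Let K < 0 and let f: [a,b] → ℝ be a Lipschitz function with f ≥ 0. Then the following are equivalent: (i) f satisfies f'' + K f ≤ 0 in the distributional sense on (a,b); (ii) for all t₀, t₁ ∈ [a,b] with t₀ ≠ t₁ and all s ∈ [0,1], f((1−s)t₀ + s t₁) ≥ (sinh((1−s)√(−K)·|t₁−t₀|)/sinh(√(−K)·|t₁−t₀|))·f(t₀) + (sinh(s√(−K)·|t₁−t₀|)/sinh(√(−K)·|t₁−t₀|))·f(t₁). -/

import Mathlib

open MeasureTheory Real Set Filter Metric Topology Function
open scoped Convolution

set_option maxHeartbeats 1000000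

namespace Statement8Aux


lemma maxprin {K : ℝ} (hK : K < 0) {g g' g'' : ℝ → ℝ}
    (hg : ∀ t, HasDerivAt g (g' t) t) (hg' : ∀ t, HasDerivAt g' (g'' t) t)
    {c d : ℝ} (hcd : c < d) (hsup : ∀ t ∈ Icc c d, g'' t + K * g t ≤ 0)
    (hc : 0 ≤ g c) (hd : 0 ≤ g d) : ∀ t ∈ Icc c d, 0 ≤ g t := by
  have gcont : Continuous g := continuous_iff_continuousAt.2 fun t => (hg t).continuousAt
  obtain ⟨t0, ht0, hmin⟩ := isCompact_Icc.exists_isMinOn (nonempty_Icc.2 hcd.le)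
    gcont.continuousOn
  rcases le_or_gt 0 (g t0) with h0 | h0
  · intro t ht; exact h0.trans (hmin ht)
  exfalso
  have ht0c : t0 ≠ c := by rintro rfl; exact absurd hc (not_le.2 h0)
  have ht0d : t0 ≠ d := by rintro rfl; exact absurd hd (not_le.2 h0)
  have ht0o : t0 ∈ Ioo c d := ⟨lt_of_le_of_ne ht0.1 (Ne.symm ht0c), lt_of_le_of_ne ht0.2 ht0d⟩
  have hloc : IsLocalMin g t0 := hmin.isLocalMin (Icc_mem_nhds ht0o.1 ht0o.2)
  have hg'0 : g' t0 = 0 := by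
    have h := hloc.deriv_eq_zero
    rwa [(hg t0).deriv] at h
  have hg''neg : g'' t0 < 0 := by
    have h := hsup t0 ht0
    nlinarith
  have hs : Tendsto (slope g' t0) (𝓝[>] t0) (𝓝 (g'' t0)) :=
    (hasDerivAt_iff_tendsto_slope.1 (hg' t0)).mono_left
      (nhdsWithin_mono _ (fun x hx => ne_of_gt hx))
  have hev : ∀ᶠ u in 𝓝[>] t0, slope g' t0 u < 0 := hs.eventually_lt_const hg''neg
  have hev' : ∀ᶠ u in 𝓝[>] t0, g' u < 0 := by
    filter_upwards [hev, self_mem_nhdsWithin] with u hu hu'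
    have hne : u - t0 ≠ 0 := sub_ne_zero.2 (ne_of_gt hu')
    have : g' u = slope g' t0 u * (u - t0) := by
      rw [slope_def_field, hg'0, sub_zero, div_mul_cancel₀ _ hne]
    rw [this]
    exact mul_neg_of_neg_of_pos hu (by simpa [sub_pos] using hu')
  rw [eventually_nhdsWithin_iff] at hev'
  rw [Metric.eventually_nhds_iff] at hev'
  obtain ⟨δ, hδpos, hδ⟩ := hev'
  set w := min (t0 + δ / 2) ((t0 + d) / 2) with hw
  have hw1 : t0 < w := lt_min (by linarith) (by linarith [ht0o.2])
  have hwmem : w ∈ Icc c d :=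
    ⟨ht0.1.trans hw1.le, (min_le_right _ _).trans (by linarith [ht0o.2])⟩
  have anti : StrictAntiOn g (Icc t0 w) := by
    refine strictAntiOn_of_deriv_neg (convex_Icc _ _) gcont.continuousOn (fun x hx => ?_)
    rw [interior_Icc] at hx
    rw [(hg x).deriv]
    refine hδ ?_ hx.1
    rw [Real.dist_eq, abs_of_pos (by linarith [hx.1])]
    have hxw : x < w := hx.2
    have : w ≤ t0 + δ / 2 := min_le_left _ _
    linarith
  have hlt : g w < g t0 := anti ⟨le_refl _, hw1.le⟩ ⟨hw1.le, le_refl _⟩ hw1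
  exact absurd (hmin hwmem) (not_le.2 hlt)

lemma smooth_comparison {K : ℝ} (hK : K < 0) {g g' g'' : ℝ → ℝ}
    (hg : ∀ t, HasDerivAt g (g' t) t) (hg' : ∀ t, HasDerivAt g' (g'' t) t)
    {c d : ℝ} (hcd : c < d) (hsup : ∀ t ∈ Icc c d, g'' t + K * g t ≤ 0) :
    ∀ p ∈ Icc c d,
      (Real.sinh (Real.sqrt (-K) * (d - p)) * g c
        + Real.sinh (Real.sqrt (-K) * (p - c)) * g d) / Real.sinh (Real.sqrt (-K) * (d - c))
        ≤ g p := by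
  set α := Real.sqrt (-K) with hα
  have hαpos : 0 < α := Real.sqrt_pos.2 (by linarith)
  have hα2 : α ^ 2 = -K := Real.sq_sqrt (by linarith)
  set S := Real.sinh (α * (d - c)) with hS
  have hSpos : 0 < S := by
    rw [hS]; exact Real.sinh_pos_iff.2 (mul_pos hαpos (by linarith))
  set u : ℝ → ℝ := fun t =>
    (Real.sinh (α * (d - t)) * g c + Real.sinh (α * (t - c)) * g d) / S with hu_def
  set u' : ℝ → ℝ := fun t =>
    (-(α * Real.cosh (α * (d - t))) * g c + α * Real.cosh (α * (t - c)) * g d) / S with hu'_def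
  set u'' : ℝ → ℝ := fun t =>
    (α ^ 2 * Real.sinh (α * (d - t)) * g c + α ^ 2 * Real.sinh (α * (t - c)) * g d) / S
    with hu''_def
  have hd1 : ∀ t, HasDerivAt (fun t => Real.sinh (α * (d - t)))
      (-(α * Real.cosh (α * (d - t)))) t := by
    intro t
    have h0 : HasDerivAt (fun t : ℝ => α * (d - t)) (α * (-1)) t :=
      ((hasDerivAt_id t).const_sub d).const_mul α
    have := h0.sinh
    convert this using 1
    ring
  have hd2 : ∀ t, HasDerivAt (fun t => Real.sinh (α * (t - c)))
      (α * Real.cosh (α * (t - c))) t := by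
    intro t
    have h0 : HasDerivAt (fun t : ℝ => α * (t - c)) (α * 1) t :=
      ((hasDerivAt_id t).sub_const c).const_mul α
    have := h0.sinh
    convert this using 1
    ring
  have hd1' : ∀ t, HasDerivAt (fun t => -(α * Real.cosh (α * (d - t))))
      (α ^ 2 * Real.sinh (α * (d - t))) t := by
    intro t
    have h0 : HasDerivAt (fun t : ℝ => α * (d - t)) (α * (-1)) t :=
      ((hasDerivAt_id t).const_sub d).const_mul α
    have := (h0.cosh.const_mul α).neg
    exact this.congr_deriv (by ring)
  have hd2' : ∀ t, HasDerivAt (fun t => α * Real.cosh (α * (t - c)))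
      (α ^ 2 * Real.sinh (α * (t - c))) t := by
    intro t
    have h0 : HasDerivAt (fun t : ℝ => α * (t - c)) (α * 1) t :=
      ((hasDerivAt_id t).sub_const c).const_mul α
    have := h0.cosh.const_mul α
    exact this.congr_deriv (by ring)
  have hu : ∀ t, HasDerivAt u (u' t) t := fun t =>
    (((hd1 t).mul_const (g c)).add ((hd2 t).mul_const (g d))).div_const S
  have hu' : ∀ t, HasDerivAt u' (u'' t) t := fun t =>
    (((hd1' t).mul_const (g c)).add ((hd2' t).mul_const (g d))).div_const S
  set w : ℝ → ℝ := fun t => g t - u t with hw_def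
  have hw : ∀ t, HasDerivAt w (g' t - u' t) t := fun t => (hg t).sub (hu t)
  have hw' : ∀ t, HasDerivAt (fun t => g' t - u' t) (g'' t - u'' t) t := fun t =>
    (hg' t).sub (hu' t)
  have huK : ∀ t, u'' t + K * u t = 0 := by
    intro t
    have : u'' t = α ^ 2 * u t := by
      simp only [hu''_def, hu_def]
      ring
    rw [this, hα2]
    ring
  have hwsup : ∀ t ∈ Icc c d, (g'' t - u'' t) + K * w t ≤ 0 := by
    intro t ht
    have h1 := hsup t ht
    have h2 := huK t
    simp only [hw_def]
    nlinarith
  have hwc : 0 ≤ w c := by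
    have : u c = g c := by
      simp only [hu_def]
      rw [sub_self, mul_zero, Real.sinh_zero, zero_mul, add_zero, ← hS]
      field_simp
    simp [hw_def, this]
  have hwd : 0 ≤ w d := by
    have : u d = g d := by
      simp only [hu_def]
      rw [sub_self, mul_zero, Real.sinh_zero, zero_mul, zero_add, ← hS]
      field_simp
    simp [hw_def, this]
  intro p hp
  have := maxprin hK hw hw' hcd hwsup hwc hwd p hp
  have hup : u p ≤ g p := by simpa [hw_def, sub_nonneg] using this
  simpa [hu_def] using hup



variable {K a b : ℝ}

lemma indicator_integrable {f : ℝ → ℝ} (hab : a < b) (fcont : ContinuousOn f (Icc a b)) :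
    Integrable ((Ioo a b).indicator f) := by
  exact ((fcont.integrableOn_Icc).mono_set Ioo_subset_Icc_self).integrable_indicator
    measurableSet_Ioo

lemma indicator_continuousAt {f : ℝ → ℝ} (fcont : ContinuousOn f (Icc a b)) {x : ℝ}
    (hx : x ∈ Ioo a b) : ContinuousAt ((Ioo a b).indicator f) x := by
  have h1 : ContinuousAt f x :=
    (fcont.continuousWithinAt (Ioo_subset_Icc_self hx)).continuousAt
      (Icc_mem_nhds hx.1 hx.2)
  refine h1.congr ?_
  filter_upwards [isOpen_Ioo.mem_nhds hx] with y hy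
  exact (Set.indicator_of_mem hy f).symm

lemma conv_step (hK : K < 0) (hab : a < b) {f : ℝ → ℝ}
    (fcont : ContinuousOn f (Icc a b))
    (hyp : ∀ φ : ℝ → ℝ, ContDiff ℝ (⊤ : ℕ∞) φ → HasCompactSupport φ →
        tsupport φ ⊆ Set.Ioo a b → (∀ t, 0 ≤ φ t) →
        ∫ t in Set.Ioo a b, f t * (deriv (deriv φ) t + K * φ t) ≤ 0)
    {c d : ℝ} (hac : a < c) (hcd : c < d) (hdb : d < b) :
    ∀ p ∈ Icc c d,
      (Real.sinh (Real.sqrt (-K) * (d - p)) * f c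
        + Real.sinh (Real.sqrt (-K) * (p - c)) * f d) / Real.sinh (Real.sqrt (-K) * (d - c))
        ≤ f p := by
  set F := (Ioo a b).indicator f with hF
  have hFi : Integrable F := indicator_integrable hab fcont
  have hFloc : LocallyIntegrable F := hFi.locallyIntegrable
  set δ : ℝ := min (c - a) (b - d) / 2 with hδ
  have hδpos : 0 < δ := by
    have : 0 < min (c - a) (b - d) := lt_min (by linarith) (by linarith)
    positivity
  have hδca : δ < c - a := by
    have h1 : min (c - a) (b - d) ≤ c - a := min_le_left _ _
    have : 0 < min (c - a) (b - d) := lt_min (by linarith) (by linarith)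
    rw [hδ]; linarith
  have hδbd : δ < b - d := by
    have h1 : min (c - a) (b - d) ≤ b - d := min_le_right _ _
    have : 0 < min (c - a) (b - d) := lt_min (by linarith) (by linarith)
    rw [hδ]; linarith
  have hrpos : ∀ n : ℕ, (0:ℝ) < δ / (n + 1) := fun n => by positivity
  set Φ : ℕ → ContDiffBump (0:ℝ) := fun n =>
    ⟨δ / (2 * (n + 1)), δ / (n + 1), by positivity, by
      rw [div_lt_div_iff₀ (by positivity) (by positivity)]
      nlinarith [hrpos n, hδpos]⟩ with hΦ
  set ρ : ℕ → ℝ → ℝ := fun n => (Φ n).normed volume with hρ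
  have hρC : ∀ n, ContDiff ℝ (⊤:ℕ∞) (ρ n) := fun n => (Φ n).contDiff_normed
  have hρsupp : ∀ n, HasCompactSupport (ρ n) := fun n => (Φ n).hasCompactSupport_normed
  have hρpos : ∀ n y, 0 ≤ ρ n y := fun n y => (Φ n).nonneg_normed y
  have hρC1 : ∀ n, ContDiff ℝ 1 (ρ n) := fun n => (hρC n).of_le (by exact_mod_cast le_top)
  have hρ'C : ∀ n, ContDiff ℝ (⊤:ℕ∞) (deriv (ρ n)) := fun n =>
    (contDiff_infty_iff_deriv.mp (hρC n)).2
  have hρ'supp : ∀ n, HasCompactSupport (deriv (ρ n)) := fun n => (hρsupp n).deriv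
  set g : ℕ → ℝ → ℝ := fun n => (ρ n) ⋆ F with hg_def
  set g' : ℕ → ℝ → ℝ := fun n => (deriv (ρ n)) ⋆ F with hg'_def
  set g'' : ℕ → ℝ → ℝ := fun n => (deriv (deriv (ρ n))) ⋆ F with hg''_def
  have hg : ∀ n x, HasDerivAt (g n) (g' n x) x := fun n x =>
    (hρsupp n).hasDerivAt_convolution_left _ (hρC1 n) hFloc x
  have hg' : ∀ n x, HasDerivAt (g' n) (g'' n x) x := fun n x =>
    (hρ'supp n).hasDerivAt_convolution_left _ ((hρ'C n).of_le (by exact_mod_cast le_top)) hFloc x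
  -- the differential inequality for the mollifications
  have hsup : ∀ n, ∀ x ∈ Icc c d, g'' n x + K * g n x ≤ 0 := by
    intro n x hx
    set φx : ℝ → ℝ := fun y => ρ n (x - y) with hφx
    have hφxC : ContDiff ℝ (⊤:ℕ∞) φx := (hρC n).comp (contDiff_const.sub contDiff_id)
    have hsupport : Function.support φx ⊆ ball x ((Φ n).rOut) := by
      intro y hy
      have h1 : x - y ∈ Function.support (ρ n) := by
        simp only [Function.mem_support] at hy ⊢
        exact hy
      rw [(Φ n).support_normed_eq, mem_ball_zero_iff] at h1
      rw [mem_ball, Real.dist_eq, abs_sub_comm]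
      rwa [Real.norm_eq_abs] at h1
    have hts : tsupport φx ⊆ closedBall x ((Φ n).rOut) :=
      (closure_mono hsupport).trans closure_ball_subset_closedBall
    have hrout : (Φ n).rOut = δ / (n + 1) := rfl
    have hrle : (Φ n).rOut ≤ δ := by
      rw [hrout, div_le_iff₀ (by positivity)]
      nlinarith [hδpos]
    have hballsub : closedBall x ((Φ n).rOut) ⊆ Ioo a b := by
      intro y hy
      simp only [mem_closedBall, Real.dist_eq] at hy
      have h1 := abs_le.1 hy
      constructor
      · have := hx.1; linarith [h1.1, hrle]
      · have := hx.2; linarith [h1.2, hrle]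
    have hcs : HasCompactSupport φx := HasCompactSupport.intro
      (isCompact_closedBall x ((Φ n).rOut)) (fun y hy => by
        by_contra h
        exact hy (hts (subset_closure (Function.mem_support.2 h))))
    have hsub : tsupport φx ⊆ Ioo a b := hts.trans hballsub
    have hφpos : ∀ y, 0 ≤ φx y := fun y => hρpos n _
    -- derivative computations
    have hρdiff : Differentiable ℝ (ρ n) := (hρC n).differentiable (by simp)
    have hρ'diff : Differentiable ℝ (deriv (ρ n)) := (hρ'C n).differentiable (by simp)
    have hD1 : deriv φx = fun y => -(deriv (ρ n) (x - y)) := by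
      funext y
      have inner : HasDerivAt (fun y : ℝ => x - y) (-1) y := (hasDerivAt_id y).const_sub x
      have h2 : HasDerivAt φx (deriv (ρ n) (x - y) * (-1)) y :=
        ((hρdiff (x - y)).hasDerivAt).comp y inner
      have h3 : HasDerivAt φx (-(deriv (ρ n) (x - y))) y := by
        convert h2 using 1; ring
      exact h3.deriv
    have hD2 : deriv (deriv φx) = fun y => deriv (deriv (ρ n)) (x - y) := by
      funext y
      rw [hD1]
      have inner : HasDerivAt (fun y : ℝ => x - y) (-1) y := (hasDerivAt_id y).const_sub x
      have h2 : HasDerivAt (fun y => deriv (ρ n) (x - y))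
          (deriv (deriv (ρ n)) (x - y) * (-1)) y :=
        ((hρ'diff (x - y)).hasDerivAt).comp y inner
      have h3 : HasDerivAt (fun y => -(deriv (ρ n) (x - y)))
          (deriv (deriv (ρ n)) (x - y)) y := by
        exact h2.neg.congr_deriv (by ring)
      exact h3.deriv
    have key := hyp φx hφxC hcs hsub hφpos
    rw [hD2] at key
    -- rewrite convolutions as integrals
    have hρ''C : Continuous (deriv (deriv (ρ n))) :=
      ((contDiff_infty_iff_deriv.mp (hρ'C n)).2).continuous
    have hρ''supp : HasCompactSupport (deriv (deriv (ρ n))) := (hρ'supp n).deriv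
    have hρcont : Continuous (ρ n) := (hρC n).continuous
    have changevar : ∀ q : ℝ → ℝ, (∫ t, q t * F (x - t)) = ∫ t, q (x - t) * F t := by
      intro q
      have h1 := integral_sub_left_eq_self (fun t => q t * F (x - t)) volume x
      simp only [sub_sub_cancel] at h1
      exact h1.symm
    have hconv1 : g n x = ∫ t, ρ n (x - t) * F t := by
      rw [hg_def]
      simp only [convolution_def, ContinuousLinearMap.lsmul_apply, smul_eq_mul]
      exact changevar (ρ n)
    have hconv2 : g'' n x = ∫ t, deriv (deriv (ρ n)) (x - t) * F t := by
      rw [hg''_def]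
      simp only [convolution_def, ContinuousLinearMap.lsmul_apply, smul_eq_mul]
      exact changevar (deriv (deriv (ρ n)))
    obtain ⟨C2, hC2⟩ := hρ''supp.exists_bound_of_continuous hρ''C
    obtain ⟨C0, hC0⟩ := (hρsupp n).exists_bound_of_continuous hρcont
    have hint2 : Integrable (fun t => deriv (deriv (ρ n)) (x - t) * F t) := by
      refine hFi.bdd_mul ?_ (Eventually.of_forall fun t => hC2 (x - t))
      exact (hρ''C.comp (continuous_const.sub continuous_id)).aestronglyMeasurable
    have hint0 : Integrable (fun t => ρ n (x - t) * F t) := by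
      refine hFi.bdd_mul ?_ (Eventually.of_forall fun t => hC0 (x - t))
      exact (hρcont.comp (continuous_const.sub continuous_id)).aestronglyMeasurable
    have hsplit : g'' n x + K * g n x
        = ∫ t, (deriv (deriv (ρ n)) (x - t) * F t + K * (ρ n (x - t) * F t)) := by
      rw [hconv1, hconv2, integral_add hint2 (hint0.const_mul K), integral_const_mul]
    have heq : (fun t => deriv (deriv (ρ n)) (x - t) * F t + K * (ρ n (x - t) * F t))
        = (Ioo a b).indicator
            (fun t => f t * (deriv (deriv (ρ n)) (x - t) + K * ρ n (x - t))) := by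
      funext t
      by_cases ht : t ∈ Ioo a b
      · simp only [hF, Set.indicator_of_mem ht]
        ring
      · simp [hF, Set.indicator_of_notMem ht]
    rw [hsplit, heq, integral_indicator measurableSet_Ioo]
    exact key
  -- comparison for the mollifications
  have hcomp : ∀ n, ∀ p ∈ Icc c d,
      (Real.sinh (Real.sqrt (-K) * (d - p)) * g n c
        + Real.sinh (Real.sqrt (-K) * (p - c)) * g n d) / Real.sinh (Real.sqrt (-K) * (d - c))
        ≤ g n p := fun n =>
    smooth_comparison hK (hg n) (hg' n) hcd (hsup n)
  have hroutlim : Tendsto (fun n : ℕ => (Φ n).rOut) atTop (𝓝 0) := by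
    have h1 : Tendsto (fun n : ℕ => δ * (1 / ((n:ℝ) + 1))) atTop (𝓝 (δ * 0)) :=
      tendsto_const_nhds.mul tendsto_one_div_add_atTop_nhds_zero_nat
    simpa [mul_one_div, hΦ, div_eq_mul_inv] using h1
  have htends : ∀ x ∈ Ioo a b, Tendsto (fun n => g n x) atTop (𝓝 (f x)) := by
    intro x hx
    have hcg : Tendsto (uncurry fun (_ : ℕ) (y : ℝ) => F y) (atTop ×ˢ 𝓝 x) (𝓝 (F x)) := by
      have h1 := (indicator_continuousAt fcont hx).tendsto
      exact h1.comp tendsto_snd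
    have h2 := ContDiffBump.convolution_tendsto_right (l := atTop) (φ := Φ)
      (g := fun _ : ℕ => F) (k := fun _ : ℕ => x) hroutlim
      (Eventually.of_forall fun _ => hFi.aestronglyMeasurable) hcg tendsto_const_nhds
    have hFx : F x = f x := Set.indicator_of_mem hx f
    rw [hFx] at h2
    exact h2
  intro p hp
  have hcm : c ∈ Ioo a b := ⟨hac, hcd.trans hdb⟩
  have hdm : d ∈ Ioo a b := ⟨hac.trans hcd, hdb⟩
  have hpm : p ∈ Ioo a b := ⟨hac.trans_le hp.1, hp.2.trans_lt hdb⟩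
  have hLHS : Tendsto (fun n =>
      (Real.sinh (Real.sqrt (-K) * (d - p)) * g n c
        + Real.sinh (Real.sqrt (-K) * (p - c)) * g n d) / Real.sinh (Real.sqrt (-K) * (d - c)))
      atTop (𝓝 ((Real.sinh (Real.sqrt (-K) * (d - p)) * f c
        + Real.sinh (Real.sqrt (-K) * (p - c)) * f d) / Real.sinh (Real.sqrt (-K) * (d - c)))) :=
    (((htends c hcm).const_mul _).add ((htends d hdm).const_mul _)).div_const _
  exact le_of_tendsto_of_tendsto hLHS (htends p hpm)
    (Eventually.of_forall fun n => hcomp n p hp)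



variable {K a b : ℝ}

lemma conv_step_closed (hK : K < 0) (hab : a < b) {f : ℝ → ℝ}
    (fcont : ContinuousOn f (Icc a b))
    (hyp : ∀ φ : ℝ → ℝ, ContDiff ℝ (⊤ : ℕ∞) φ → HasCompactSupport φ →
        tsupport φ ⊆ Set.Ioo a b → (∀ t, 0 ≤ φ t) →
        ∫ t in Set.Ioo a b, f t * (deriv (deriv φ) t + K * φ t) ≤ 0)
    {c d : ℝ} (hac : a ≤ c) (hcd : c < d) (hdb : d ≤ b) :
    ∀ p ∈ Icc c d,
      (Real.sinh (Real.sqrt (-K) * (d - p)) * f c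
        + Real.sinh (Real.sqrt (-K) * (p - c)) * f d) / Real.sinh (Real.sqrt (-K) * (d - c))
        ≤ f p := by
  intro p hp
  have hαpos : 0 < Real.sqrt (-K) := Real.sqrt_pos.2 (by linarith)
  set α := Real.sqrt (-K) with hα
  set e : ℕ → ℝ := fun n => (d - c) / (4 * ((n : ℝ) + 1)) with he
  have hepos : ∀ n, 0 < e n := fun n => div_pos (by linarith) (by positivity)
  have hemul : ∀ n, e n * (4 * ((n : ℝ) + 1)) = d - c := fun n => by
    rw [he]; field_simp
  have h2e : ∀ n, 2 * e n < d - c := by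
    intro n
    have h1 := hemul n
    have h2 := hepos n
    nlinarith [Nat.cast_nonneg (α := ℝ) n]
  set cn : ℕ → ℝ := fun n => c + e n with hcn
  set dn : ℕ → ℝ := fun n => d - e n with hdn
  set pn : ℕ → ℝ := fun n => max (cn n) (min p (dn n)) with hpn
  have hacn : ∀ n, a < cn n := fun n => lt_of_le_of_lt hac (by simp [hcn]; exact hepos n)
  have hcdn : ∀ n, cn n < dn n := fun n => by
    have := h2e n; simp only [hcn, hdn]; linarith
  have hdbn : ∀ n, dn n < b := fun n => lt_of_lt_of_le (by simp [hdn]; exact hepos n) hdb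
  have hpnm : ∀ n, pn n ∈ Icc (cn n) (dn n) := fun n =>
    ⟨le_max_left _ _, max_le (hcdn n).le (min_le_right _ _)⟩
  have key : ∀ n,
      (Real.sinh (α * (dn n - pn n)) * f (cn n)
        + Real.sinh (α * (pn n - cn n)) * f (dn n)) / Real.sinh (α * (dn n - cn n))
        ≤ f (pn n) := fun n =>
    conv_step hK hab fcont hyp (hacn n) (hcdn n) (hdbn n) (pn n) (hpnm n)
  -- limits
  have hel : Tendsto e atTop (𝓝 0) := by
    have h1 : Tendsto (fun n : ℕ => ((d - c) / 4) * (1 / ((n:ℝ) + 1))) atTop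
        (𝓝 (((d - c) / 4) * 0)) :=
      tendsto_const_nhds.mul tendsto_one_div_add_atTop_nhds_zero_nat
    have h0 : ((d - c) / 4) * (0:ℝ) = 0 := by ring
    rw [h0] at h1
    refine h1.congr (fun n => ?_)
    rw [he, mul_one_div, div_div]
  have hcl : Tendsto cn atTop (𝓝 c) := by
    have := tendsto_const_nhds.add hel (f := fun _ : ℕ => c)
    simpa using this
  have hdl : Tendsto dn atTop (𝓝 d) := by
    have := tendsto_const_nhds.sub hel (f := fun _ : ℕ => d)
    simpa using this
  have hpl : Tendsto pn atTop (𝓝 p) := by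
    have h1 : Tendsto pn atTop (𝓝 (max c (min p d))) :=
      hcl.max (tendsto_const_nhds.min hdl)
    rwa [min_eq_left (hp.2), max_eq_right (hp.1)] at h1
  -- continuity of f along sequences inside Icc a b
  have hfc : ∀ (x : ℝ) (xn : ℕ → ℝ), Tendsto xn atTop (𝓝 x) → (∀ n, xn n ∈ Icc a b) →
      x ∈ Icc a b → Tendsto (fun n => f (xn n)) atTop (𝓝 (f x)) := by
    intro x xn hxn hmem hx
    have h1 : Tendsto xn atTop (𝓝[Icc a b] x) :=
      tendsto_nhdsWithin_of_tendsto_nhds_of_eventually_within xn hxn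
        (Eventually.of_forall hmem)
    exact (fcont x hx).tendsto.comp h1
  have hcmem : ∀ n, cn n ∈ Icc a b := fun n =>
    ⟨(hacn n).le, ((hcdn n).trans (hdbn n)).le⟩
  have hdmem : ∀ n, dn n ∈ Icc a b := fun n =>
    ⟨((hacn n).trans (hcdn n)).le, (hdbn n).le⟩
  have hpmem : ∀ n, pn n ∈ Icc a b := fun n =>
    ⟨(hacn n).le.trans (hpnm n).1, (hpnm n).2.trans (hdbn n).le⟩
  have hcIcc : c ∈ Icc a b := ⟨hac, hcd.le.trans hdb⟩
  have hdIcc : d ∈ Icc a b := ⟨hac.trans hcd.le, hdb⟩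
  have hpIcc : p ∈ Icc a b := ⟨hac.trans hp.1, hp.2.trans hdb⟩
  have hfcl := hfc c cn hcl hcmem hcIcc
  have hfdl := hfc d dn hdl hdmem hdIcc
  have hfpl := hfc p pn hpl hpmem hpIcc
  have hSpos : 0 < Real.sinh (α * (d - c)) :=
    Real.sinh_pos_iff.2 (mul_pos hαpos (by linarith))
  have hnum : Tendsto (fun n =>
      Real.sinh (α * (dn n - pn n)) * f (cn n) + Real.sinh (α * (pn n - cn n)) * f (dn n))
      atTop (𝓝 (Real.sinh (α * (d - p)) * f c + Real.sinh (α * (p - c)) * f d)) := by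
    have t1 : Tendsto (fun n => α * (dn n - pn n)) atTop (𝓝 (α * (d - p))) :=
      ((hdl.sub hpl).const_mul α)
    have t2 : Tendsto (fun n => α * (pn n - cn n)) atTop (𝓝 (α * (p - c))) :=
      ((hpl.sub hcl).const_mul α)
    exact ((Real.continuous_sinh.continuousAt.tendsto.comp t1).mul hfcl).add
      ((Real.continuous_sinh.continuousAt.tendsto.comp t2).mul hfdl)
  have hden : Tendsto (fun n => Real.sinh (α * (dn n - cn n))) atTop
      (𝓝 (Real.sinh (α * (d - c)))) :=
    Real.continuous_sinh.continuousAt.tendsto.comp ((hdl.sub hcl).const_mul α)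
  exact le_of_tendsto_of_tendsto (hnum.div hden hSpos.ne') hfpl
    (Eventually.of_forall key)

lemma forward (hK : K < 0) (hab : a < b) {f : ℝ → ℝ}
    (fcont : ContinuousOn f (Icc a b))
    (hyp : ∀ φ : ℝ → ℝ, ContDiff ℝ (⊤ : ℕ∞) φ → HasCompactSupport φ →
        tsupport φ ⊆ Set.Ioo a b → (∀ t, 0 ≤ φ t) →
        ∫ t in Set.Ioo a b, f t * (deriv (deriv φ) t + K * φ t) ≤ 0) :
    ∀ t₀ ∈ Set.Icc a b, ∀ t₁ ∈ Set.Icc a b, t₀ ≠ t₁ → ∀ s ∈ Set.Icc (0 : ℝ) 1,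
        Real.sinh ((1 - s) * (Real.sqrt (-K) * |t₁ - t₀|))
            / Real.sinh (Real.sqrt (-K) * |t₁ - t₀|) * f t₀
          + Real.sinh (s * (Real.sqrt (-K) * |t₁ - t₀|))
            / Real.sinh (Real.sqrt (-K) * |t₁ - t₀|) * f t₁
          ≤ f ((1 - s) * t₀ + s * t₁) := by
  intro t₀ ht₀ t₁ ht₁ hne s hs
  rcases hne.lt_or_gt with h01 | h10
  · -- t₀ < t₁
    have habs : |t₁ - t₀| = t₁ - t₀ := abs_of_pos (by linarith)
    have hp : (1 - s) * t₀ + s * t₁ ∈ Icc t₀ t₁ := by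
      constructor <;> nlinarith [hs.1, hs.2]
    have key := conv_step_closed hK hab fcont hyp ht₀.1 h01 ht₁.2 _ hp
    rw [habs]
    have e1 : (1 - s) * (Real.sqrt (-K) * (t₁ - t₀))
        = Real.sqrt (-K) * (t₁ - ((1 - s) * t₀ + s * t₁)) := by ring
    have e2 : s * (Real.sqrt (-K) * (t₁ - t₀))
        = Real.sqrt (-K) * (((1 - s) * t₀ + s * t₁) - t₀) := by ring
    rw [e1, e2]
    refine le_trans (le_of_eq ?_) key
    ring
  · -- t₁ < t₀
    have habs : |t₁ - t₀| = t₀ - t₁ := by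
      rw [abs_of_neg (by linarith)]; ring
    have hp : (1 - s) * t₀ + s * t₁ ∈ Icc t₁ t₀ := by
      constructor <;> nlinarith [hs.1, hs.2]
    have key := conv_step_closed hK hab fcont hyp ht₁.1 h10 ht₀.2 _ hp
    rw [habs]
    have e1 : (1 - s) * (Real.sqrt (-K) * (t₀ - t₁))
        = Real.sqrt (-K) * (((1 - s) * t₀ + s * t₁) - t₁) := by ring
    have e2 : s * (Real.sqrt (-K) * (t₀ - t₁))
        = Real.sqrt (-K) * (t₀ - ((1 - s) * t₀ + s * t₁)) := by ring
    rw [e1, e2]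
    refine le_trans (le_of_eq ?_) key
    ring



lemma sinh_le_mul_cosh {y : ℝ} (hy : 0 ≤ y) : Real.sinh y ≤ y * Real.cosh y := by
  set g : ℝ → ℝ := fun x => x * Real.cosh x - Real.sinh x with hg
  have hder : ∀ x, HasDerivAt g (x * Real.sinh x) x := by
    intro x
    have h1 : HasDerivAt g (1 * Real.cosh x + x * Real.sinh x - Real.cosh x) x := by
      exact ((hasDerivAt_id x).mul (Real.hasDerivAt_cosh x)).sub (Real.hasDerivAt_sinh x)
    convert h1 using 1
    ring
  have hmono : MonotoneOn g (Icc 0 y) := by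
    rcases eq_or_lt_of_le hy with rfl | hy'
    · intro x hx z hz hxz
      have : x = z := le_antisymm hxz (hz.2.trans hx.1)
      rw [this]
    refine monotoneOn_of_deriv_nonneg (convex_Icc _ _) ?_ ?_ ?_
    · exact Continuous.continuousOn (by
        continuity)
    · intro x hx
      exact ((hder x).differentiableAt).differentiableWithinAt
    · intro x hx
      rw [interior_Icc] at hx
      rw [(hder x).deriv]
      exact mul_nonneg hx.1.le (Real.sinh_nonneg_iff.2 hx.1.le)
  have h0 : g 0 ≤ g y := hmono ⟨le_refl _, hy⟩ ⟨hy, le_refl _⟩ hy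
  have hg0 : g 0 = 0 := by simp [hg]
  rw [hg0] at h0
  simp only [hg] at h0
  linarith

lemma symm_diff_est {ψ ψ' ψ'' : ℝ → ℝ} (hψ : ∀ x, HasDerivAt ψ (ψ' x) x)
    (hψ' : ∀ x, HasDerivAt ψ' (ψ'' x) x) (hψ''c : Continuous ψ'')
    (t : ℝ) {h ε : ℝ} (hh : 0 < h) (hε : 0 ≤ ε)
    (hb : ∀ v, |v| ≤ h → |ψ'' (t + v) - ψ'' t| ≤ ε) :
    |ψ (t + h) + ψ (t - h) - 2 * ψ t - h ^ 2 * ψ'' t| ≤ 2 * ε * h ^ 2 := by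
  have hψ'c : Continuous ψ' := continuous_iff_continuousAt.2 fun x => (hψ' x).continuousAt
  set A : ℝ → ℝ := fun u => ψ (t + u) + ψ (t - u) - 2 * ψ t - u ^ 2 * ψ'' t with hA
  set A' : ℝ → ℝ := fun u => ψ' (t + u) - ψ' (t - u) - 2 * u * ψ'' t with hA'
  have hAd : ∀ u, HasDerivAt A (A' u) u := by
    intro u
    have h1 : HasDerivAt (fun u : ℝ => ψ (t + u)) (ψ' (t + u) * 1) u :=
      (hψ (t + u)).comp u ((hasDerivAt_id u).const_add t)
    have h2 : HasDerivAt (fun u : ℝ => ψ (t - u)) (ψ' (t - u) * (-1)) u :=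
      (hψ (t - u)).comp u ((hasDerivAt_id u).const_sub t)
    have h3 : HasDerivAt (fun u : ℝ => u ^ 2 * ψ'' t) (2 * u * ψ'' t) u := by
      have := (hasDerivAt_pow 2 u).mul_const (ψ'' t)
      exact this.congr_deriv (by ring)
    have h4 := ((h1.add h2).sub_const (2 * ψ t)).sub h3
    exact h4.congr_deriv (by ring)
  have hA'c : Continuous A' := by
    simp only [hA']
    continuity
  have hA'bound : ∀ u ∈ Set.uIoc (0:ℝ) h, ‖A' u‖ ≤ 2 * ε * h := by
    intro u hu
    rw [Set.uIoc_of_le hh.le] at hu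
    have hu1 : 0 < u := hu.1
    have hu2 : u ≤ h := hu.2
    have hft : ∫ x in (t - u)..(t + u), ψ'' x = ψ' (t + u) - ψ' (t - u) :=
      intervalIntegral.integral_eq_sub_of_hasDerivAt (fun x _ => hψ' x)
        (hψ''c.intervalIntegrable _ _)
    have hconst : ∫ _x in (t - u)..(t + u), ψ'' t = 2 * u * ψ'' t := by
      rw [intervalIntegral.integral_const]
      simp only [smul_eq_mul]
      ring
    have hrepr : A' u = ∫ x in (t - u)..(t + u), (ψ'' x - ψ'' t) := by
      rw [intervalIntegral.integral_sub (hψ''c.intervalIntegrable _ _)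
        intervalIntegrable_const, hft, hconst]
    rw [hrepr]
    have hbd : ∀ x ∈ Set.uIoc (t - u) (t + u), ‖ψ'' x - ψ'' t‖ ≤ ε := by
      intro x hx
      rw [Set.uIoc_of_le (by linarith)] at hx
      have hv : |x - t| ≤ h := by
        rw [abs_le]
        constructor <;> [linarith [hx.1]; linarith [hx.2]]
      have := hb (x - t) hv
      rwa [add_sub_cancel] at this
    have := intervalIntegral.norm_integral_le_of_norm_le_const hbd
    rw [show t + u - (t - u) = 2 * u by ring] at this
    refine this.trans ?_
    rw [abs_of_pos (by linarith)]
    nlinarith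
  have hA0 : A 0 = 0 := by simp [hA]; ring
  have hint : ∫ u in (0:ℝ)..h, A' u = A h - A 0 :=
    intervalIntegral.integral_eq_sub_of_hasDerivAt (fun u _ => hAd u)
      (hA'c.intervalIntegrable _ _)
  have hfinal : ‖∫ u in (0:ℝ)..h, A' u‖ ≤ 2 * ε * h * |h - 0| :=
    intervalIntegral.norm_integral_le_of_norm_le_const hA'bound
  rw [hint, hA0, sub_zero] at hfinal
  rw [show |h - 0| = h from by rw [sub_zero, abs_of_pos hh]] at hfinal
  calc |ψ (t + h) + ψ (t - h) - 2 * ψ t - h ^ 2 * ψ'' t| = ‖A h‖ := by simp [hA, Real.norm_eq_abs]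
    _ ≤ 2 * ε * h * h := hfinal
    _ = 2 * ε * h ^ 2 := by ring

lemma symm_tendsto {ψ ψ' ψ'' : ℝ → ℝ} (hψ : ∀ x, HasDerivAt ψ (ψ' x) x)
    (hψ' : ∀ x, HasDerivAt ψ' (ψ'' x) x) (hψ''c : Continuous ψ'')
    (t : ℝ) {hn : ℕ → ℝ} (hpos : ∀ n, 0 < hn n) (hlim : Tendsto hn atTop (𝓝 0)) :
    Tendsto (fun n => (ψ (t + hn n) + ψ (t - hn n) - 2 * ψ t) / (hn n) ^ 2) atTop
      (𝓝 (ψ'' t)) := by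
  rw [Metric.tendsto_atTop]
  intro ε hε
  obtain ⟨δ, hδpos, hδ⟩ := Metric.continuousAt_iff.mp (hψ''c.continuousAt (x := t)) (ε / 5)
    (by linarith)
  have hev : ∀ᶠ n in atTop, |hn n| < δ / 2 := by
    have := Metric.tendsto_atTop.mp hlim (δ / 2) (by linarith)
    obtain ⟨N, hN⟩ := this
    refine eventually_atTop.2 ⟨N, fun n hn' => ?_⟩
    have := hN n hn'
    rwa [Real.dist_eq, sub_zero] at this
  obtain ⟨N, hN⟩ := eventually_atTop.1 hev
  refine ⟨N, fun n hn' => ?_⟩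
  have hhn := hpos n
  have hhalf : hn n < δ / 2 := by
    have := hN n hn'
    rwa [abs_of_pos hhn] at this
  have hbd : ∀ v, |v| ≤ hn n → |ψ'' (t + v) - ψ'' t| ≤ ε / 5 := by
    intro v hv
    have : dist (t + v) t < δ := by
      rw [Real.dist_eq, add_sub_cancel_left]
      linarith [hv, hhalf]
    have := hδ this
    rw [Real.dist_eq] at this
    linarith
  have hest := symm_diff_est hψ hψ' hψ''c t hhn (by linarith) hbd
  rw [Real.dist_eq]
  have hne : (hn n) ^ 2 ≠ 0 := by positivity
  have heq : (ψ (t + hn n) + ψ (t - hn n) - 2 * ψ t) / (hn n) ^ 2 - ψ'' t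
      = (ψ (t + hn n) + ψ (t - hn n) - 2 * ψ t - (hn n) ^ 2 * ψ'' t) / (hn n) ^ 2 := by
    field_simp
  rw [heq, abs_div, abs_of_pos (by positivity : (0:ℝ) < (hn n) ^ 2)]
  rw [div_lt_iff₀ (by positivity)]
  calc |ψ (t + hn n) + ψ (t - hn n) - 2 * ψ t - (hn n) ^ 2 * ψ'' t|
      ≤ 2 * (ε / 5) * (hn n) ^ 2 := hest
    _ < ε * (hn n) ^ 2 := by nlinarith [mul_pos hε (pow_pos hhn 2)]

lemma cosh_tendsto {α : ℝ} (hα : 0 < α) {hn : ℕ → ℝ} (hpos : ∀ n, 0 < hn n)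
    (hlim : Tendsto hn atTop (𝓝 0)) :
    Tendsto (fun n => 2 * (Real.cosh (α * hn n) - 1) / (hn n) ^ 2) atTop (𝓝 (α ^ 2)) := by
  have hslope : Tendsto (fun y : ℝ => Real.sinh y / y) (𝓝[≠] 0) (𝓝 1) := by
    have h1 := hasDerivAt_iff_tendsto_slope.mp (Real.hasDerivAt_sinh 0)
    rw [Real.cosh_zero] at h1
    refine h1.congr fun y => ?_
    rw [slope_def_field]
    simp
  have hy : Tendsto (fun n => α * hn n / 2) atTop (𝓝[≠] (0:ℝ)) := by
    refine tendsto_nhdsWithin_of_tendsto_nhds_of_eventually_within _ ?_ ?_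
    · have h1 : Tendsto (fun n => α * hn n / 2) atTop (𝓝 (α * 0 / 2)) :=
        (hlim.const_mul α).div_const 2
      simpa using h1
    · refine Eventually.of_forall fun n => ?_
      have h0 := hpos n
      have : 0 < α * hn n / 2 := by positivity
      exact (ne_of_gt this)
  have h2 : Tendsto (fun n => Real.sinh (α * hn n / 2) / (α * hn n / 2)) atTop (𝓝 1) :=
    hslope.comp hy
  have h3 : Tendsto (fun n => α ^ 2 * (Real.sinh (α * hn n / 2) / (α * hn n / 2)) ^ 2)
      atTop (𝓝 (α ^ 2 * 1 ^ 2)) := tendsto_const_nhds.mul (h2.pow 2)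
  have h4 : ∀ n, α ^ 2 * (Real.sinh (α * hn n / 2) / (α * hn n / 2)) ^ 2
      = 2 * (Real.cosh (α * hn n) - 1) / (hn n) ^ 2 := by
    intro n
    have hch : Real.cosh (α * hn n) - 1 = 2 * Real.sinh (α * hn n / 2) ^ 2 := by
      rw [show α * hn n = 2 * (α * hn n / 2) by ring, Real.cosh_two_mul, Real.cosh_sq]
      ring
    rw [hch]
    have h5 := (hpos n).ne'
    field_simp
  have h6 := h3.congr h4
  simpa using h6

lemma mpr_dir {K a b : ℝ} (hK : K < 0) (hab : a < b) {f : ℝ → ℝ}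
    (fcont : ContinuousOn f (Icc a b)) (hnonneg : ∀ t ∈ Set.Icc a b, 0 ≤ f t)
    (hyp2 : ∀ t₀ ∈ Set.Icc a b, ∀ t₁ ∈ Set.Icc a b, t₀ ≠ t₁ → ∀ s ∈ Set.Icc (0 : ℝ) 1,
        Real.sinh ((1 - s) * (Real.sqrt (-K) * |t₁ - t₀|))
            / Real.sinh (Real.sqrt (-K) * |t₁ - t₀|) * f t₀
          + Real.sinh (s * (Real.sqrt (-K) * |t₁ - t₀|))
            / Real.sinh (Real.sqrt (-K) * |t₁ - t₀|) * f t₁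
          ≤ f ((1 - s) * t₀ + s * t₁)) :
    ∀ φ : ℝ → ℝ, ContDiff ℝ (⊤ : ℕ∞) φ → HasCompactSupport φ →
        tsupport φ ⊆ Set.Ioo a b → (∀ t, 0 ≤ φ t) →
        ∫ t in Set.Ioo a b, f t * (deriv (deriv φ) t + K * φ t) ≤ 0 := by
  have hαpos : 0 < Real.sqrt (-K) := Real.sqrt_pos.2 (by linarith)
  set α := Real.sqrt (-K) with hα
  have hα2 : α ^ 2 = -K := Real.sq_sqrt (by linarith)
  -- Step 1: the midpoint (second difference) inequality
  have hM : ∀ x h, 0 < h → a ≤ x - h → x + h ≤ b →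
      f (x - h) + f (x + h) ≤ 2 * Real.cosh (α * h) * f x := by
    intro x h hh h1 h2
    have ht₀ : x - h ∈ Icc a b := ⟨h1, by linarith⟩
    have ht₁ : x + h ∈ Icc a b := ⟨by linarith, h2⟩
    have hne : x - h ≠ x + h := by intro hc; nlinarith [hh]
    have hs : (1 / 2 : ℝ) ∈ Icc (0 : ℝ) 1 := by norm_num
    have key := hyp2 (x - h) ht₀ (x + h) ht₁ hne (1 / 2) hs
    have habs : |x + h - (x - h)| = 2 * h := by
      rw [show x + h - (x - h) = 2 * h by ring]
      exact abs_of_pos (by linarith)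
    rw [habs] at key
    rw [show (1 : ℝ) - 1 / 2 = 1 / 2 by norm_num] at key
    rw [show (1 / 2 : ℝ) * (x - h) + 1 / 2 * (x + h) = x by ring] at key
    rw [show (1 / 2 : ℝ) * (α * (2 * h)) = α * h by ring] at key
    rw [show α * (2 * h) = 2 * (α * h) by ring, Real.sinh_two_mul] at key
    have hshp : 0 < Real.sinh (α * h) := Real.sinh_pos_iff.2 (by positivity)
    have hchp : 0 < Real.cosh (α * h) := Real.cosh_pos _
    have hcoef : Real.sinh (α * h) / (2 * Real.sinh (α * h) * Real.cosh (α * h))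
        = 1 / (2 * Real.cosh (α * h)) := by
      field_simp
    rw [hcoef] at key
    rw [div_mul_eq_mul_div, div_mul_eq_mul_div, ← add_div,
      div_le_iff₀ (by positivity)] at key
    nlinarith [key]
  -- Step 2: integrate against test functions
  intro φ hφC hφcs hφsub hφpos
  obtain ⟨δ, hδpos, hδsub⟩ := hφcs.exists_thickening_subset_open isOpen_Ioo hφsub
  set φ':= deriv φ with hφ'
  set φ'' := deriv (deriv φ) with hφ''
  have hφd : Differentiable ℝ φ := hφC.differentiable (by simp)
  have hφ'C : ContDiff ℝ (⊤:ℕ∞) φ' := (contDiff_infty_iff_deriv.mp hφC).2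
  have hφ'd : Differentiable ℝ φ' := hφ'C.differentiable (by simp)
  have hφ''C : Continuous φ'' := (contDiff_infty_iff_deriv.mp hφ'C).2.continuous
  have hψ : ∀ x, HasDerivAt φ (φ' x) x := fun x => (hφd x).hasDerivAt
  have hψ' : ∀ x, HasDerivAt φ' (φ'' x) x := fun x => (hφ'd x).hasDerivAt
  obtain ⟨M2, hM2⟩ := (hφcs.deriv.deriv).exists_bound_of_continuous hφ''C
  obtain ⟨M0, hM0⟩ := hφcs.exists_bound_of_continuous hφC.continuous
  have hM2nn : 0 ≤ M2 := le_trans (norm_nonneg _) (hM2 0)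
  have hM0nn : 0 ≤ M0 := le_trans (norm_nonneg _) (hM0 0)
  set F := (Ioo a b).indicator f with hF
  have hFi : Integrable F :=
    ((fcont.integrableOn_Icc).mono_set Ioo_subset_Icc_self).integrable_indicator
      measurableSet_Ioo
  set hn : ℕ → ℝ := fun n => min (δ / 2) 1 / ((n : ℝ) + 1) with hhn
  have hmpos : (0:ℝ) < min (δ / 2) 1 := lt_min (by linarith) one_pos
  have hnpos : ∀ n, 0 < hn n := fun n => by
    rw [hhn]; positivity
  have hnle_half : ∀ n, hn n ≤ δ / 2 := fun n => by
    rw [hhn]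
    calc min (δ / 2) 1 / ((n : ℝ) + 1) ≤ min (δ / 2) 1 / 1 := by
          apply div_le_div_of_nonneg_left hmpos.le one_pos
          simp
      _ ≤ δ / 2 := by simpa using min_le_left (δ / 2) 1
  have hnle1 : ∀ n, hn n ≤ 1 := fun n => by
    rw [hhn]
    calc min (δ / 2) 1 / ((n : ℝ) + 1) ≤ min (δ / 2) 1 / 1 := by
          apply div_le_div_of_nonneg_left hmpos.le one_pos
          simp
      _ ≤ 1 := by simpa using min_le_right (δ / 2) 1
  have hnlim : Tendsto hn atTop (𝓝 0) := by
    have h1 : Tendsto (fun n : ℕ => min (δ / 2) 1 * (1 / ((n:ℝ) + 1))) atTop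
        (𝓝 (min (δ / 2) 1 * 0)) :=
      tendsto_const_nhds.mul tendsto_one_div_add_atTop_nhds_zero_nat
    rw [mul_zero] at h1
    refine h1.congr fun n => ?_
    rw [mul_one_div, hhn]
  -- integrands
  set G : ℕ → ℝ → ℝ := fun n t =>
    F t * ((φ (t + hn n) + φ (t - hn n) - 2 * Real.cosh (α * hn n) * φ t) / (hn n) ^ 2)
    with hG
  -- Step 2a : each integral is nonpositive
  have hIneg : ∀ n, (∫ t, G n t) ≤ 0 := by
    intro n
    set h := hn n with hh
    have hhp : 0 < h := hnpos n
    have cont1 : Continuous fun t => φ (t + h) :=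
      hφC.continuous.comp (continuous_id.add continuous_const)
    have cont2 : Continuous fun t => φ (t - h) :=
      hφC.continuous.comp (continuous_id.sub continuous_const)
    have i1 : Integrable (fun t => φ (t + h) * F t) :=
      hFi.bdd_mul cont1.aestronglyMeasurable (Eventually.of_forall fun t => hM0 _)
    have i2 : Integrable (fun t => φ (t - h) * F t) :=
      hFi.bdd_mul cont2.aestronglyMeasurable (Eventually.of_forall fun t => hM0 _)
    have i3 : Integrable (fun t => φ t * F t) :=
      hFi.bdd_mul hφC.continuous.aestronglyMeasurable (Eventually.of_forall fun t => hM0 _)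
    have j1 : Integrable (fun t => φ t * F (t - h)) :=
      (hFi.comp_sub_right h).bdd_mul hφC.continuous.aestronglyMeasurable
        (Eventually.of_forall fun t => hM0 _)
    have j2 : Integrable (fun t => φ t * F (t + h)) :=
      (hFi.comp_add_right h).bdd_mul hφC.continuous.aestronglyMeasurable
        (Eventually.of_forall fun t => hM0 _)
    have e1 : ∫ t, φ (t + h) * F t = ∫ t, φ t * F (t - h) := by
      have h1 := integral_add_right_eq_self (μ := volume) (fun t => φ t * F (t - h)) h
      simp only [add_sub_cancel_right] at h1
      exact h1
    have e2 : ∫ t, φ (t - h) * F t = ∫ t, φ t * F (t + h) := by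
      have h1 := integral_sub_right_eq_self (μ := volume) (fun t => φ t * F (t + h)) h
      simp only [sub_add_cancel] at h1
      exact h1
    have hXeq : G n = fun t =>
        (φ (t + h) * F t + φ (t - h) * F t - 2 * Real.cosh (α * h) * (φ t * F t)) * (1 / h ^ 2)
        := by
      funext t
      rw [hG]
      simp only [← hh]
      field_simp
    rw [hXeq]
    rw [integral_mul_const]
    apply mul_nonpos_of_nonpos_of_nonneg
    swap
    · positivity
    have i12 : Integrable (fun t => φ (t + h) * F t + φ (t - h) * F t) := i1.add i2
    have i3c : Integrable (fun t => 2 * Real.cosh (α * h) * (φ t * F t)) := i3.const_mul _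
    rw [integral_sub i12 i3c, integral_add i1 i2, integral_const_mul, e1, e2]
    have hcomb : (∫ t, φ t * F (t - h)) + (∫ t, φ t * F (t + h))
        - 2 * Real.cosh (α * h) * ∫ t, φ t * F t
        = ∫ t, (F (t - h) + F (t + h) - 2 * Real.cosh (α * h) * F t) * φ t := by
      have j12 : Integrable (fun t => φ t * F (t - h) + φ t * F (t + h)) := j1.add j2
      have j3c : Integrable (fun t => 2 * Real.cosh (α * h) * (φ t * F t)) := i3.const_mul _
      rw [← integral_const_mul, ← integral_add j1 j2, ← integral_sub j12 j3c]
      congr 1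
      funext t
      ring
    rw [hcomb]
    apply integral_nonpos
    intro t
    simp only [Pi.zero_apply]
    rcases eq_or_lt_of_le (hφpos t) with h0 | h0
    · rw [← h0, mul_zero]
    · have htsup : t ∈ tsupport φ := subset_closure (Function.mem_support.2 (ne_of_gt h0))
      have hmem : ∀ v, |v| ≤ h → t + v ∈ Ioo a b := by
        intro v hv
        apply hδsub
        rw [Metric.mem_thickening_iff]
        refine ⟨t, htsup, ?_⟩
        rw [Real.dist_eq, add_sub_cancel_left]
        calc |v| ≤ h := hv
          _ ≤ δ / 2 := hnle_half n
          _ < δ := by linarith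
      have ht1 : t + h ∈ Ioo a b := hmem h (by rw [abs_of_pos hhp])
      have ht2 : t - h ∈ Ioo a b := by
        have := hmem (-h) (by rw [abs_neg, abs_of_pos hhp])
        rwa [show t + -h = t - h by ring] at this
      have ht0 : t ∈ Ioo a b := by
        have := hmem 0 (by simp [hhp.le])
        rwa [add_zero] at this
      rw [hF, Set.indicator_of_mem ht1 f, Set.indicator_of_mem ht2 f,
        Set.indicator_of_mem ht0 f]
      have hMt := hM t h hhp ht2.1.le ht1.2.le
      exact mul_nonpos_of_nonpos_of_nonneg (by linarith) (hφpos t)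
  -- Step 2b : bounds for dominated convergence
  have hFb : ∀ t, |F t| ≤ max ‖f t‖ 0 := by
    intro t
    by_cases ht : t ∈ Ioo a b
    · rw [hF, Set.indicator_of_mem ht]
      exact le_max_left _ _
    · rw [hF, Set.indicator_of_notMem ht, abs_zero]
      exact le_max_right _ _
  set C : ℝ := 5 * M2 + α ^ 2 * Real.cosh (α / 2) ^ 2 * M0 with hC
  have hbound : ∀ n t, |G n t| ≤ |F t| * C := by
    intro n t
    set h := hn n with hh
    have hhp : 0 < h := hnpos n
    rw [hG, abs_mul]
    apply mul_le_mul_of_nonneg_left _ (abs_nonneg _)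
    -- |(sym - cosh part)/h²| ≤ C
    have hbd2 : ∀ v : ℝ, |v| ≤ h → |φ'' (t + v) - φ'' t| ≤ 2 * M2 := by
      intro v _
      calc |φ'' (t + v) - φ'' t| ≤ |φ'' (t + v)| + |φ'' t| := abs_sub _ _
        _ ≤ M2 + M2 := add_le_add (hM2 _) (hM2 _)
        _ = 2 * M2 := by ring
    have hest := symm_diff_est hψ hψ' hφ''C t hhp (by linarith) hbd2
    have hsym : |(φ (t + h) + φ (t - h) - 2 * φ t) / h ^ 2| ≤ 5 * M2 := by
      rw [abs_div, abs_of_pos (by positivity : (0:ℝ) < h ^ 2), div_le_iff₀ (by positivity)]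
      calc |φ (t + h) + φ (t - h) - 2 * φ t|
          ≤ |φ (t + h) + φ (t - h) - 2 * φ t - h ^ 2 * φ'' t| + |h ^ 2 * φ'' t| := by
            have := abs_sub_abs_le_abs_sub (φ (t + h) + φ (t - h) - 2 * φ t)
              (h ^ 2 * φ'' t)
            have h2 := abs_add_le (φ (t + h) + φ (t - h) - 2 * φ t - h ^ 2 * φ'' t)
              (h ^ 2 * φ'' t)
            calc |φ (t + h) + φ (t - h) - 2 * φ t|
                = |(φ (t + h) + φ (t - h) - 2 * φ t - h ^ 2 * φ'' t) + h ^ 2 * φ'' t| := by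
                  ring_nf
              _ ≤ _ := h2
        _ ≤ 2 * (2 * M2) * h ^ 2 + h ^ 2 * M2 := by
            refine add_le_add hest ?_
            rw [abs_mul, abs_of_pos (by positivity : (0:ℝ) < h ^ 2)]
            exact mul_le_mul_of_nonneg_left (hM2 t) (by positivity)
        _ = 5 * M2 * h ^ 2 := by ring
    have hcosh : |2 * (Real.cosh (α * h) - 1) / h ^ 2 * φ t|
        ≤ α ^ 2 * Real.cosh (α / 2) ^ 2 * M0 := by
      have hch1 : Real.cosh (α * h) - 1 = 2 * Real.sinh (α * h / 2) ^ 2 := by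
        rw [show α * h = 2 * (α * h / 2) by ring, Real.cosh_two_mul, Real.cosh_sq]
        ring
      have hsh : Real.sinh (α * h / 2) ≤ (α * h / 2) * Real.cosh (α * h / 2) :=
        sinh_le_mul_cosh (by positivity)
      have hshnn : 0 ≤ Real.sinh (α * h / 2) := Real.sinh_nonneg_iff.2 (by positivity)
      have hcc : Real.cosh (α * h / 2) ≤ Real.cosh (α / 2) := by
        rw [Real.cosh_le_cosh]
        rw [abs_of_pos (by positivity : (0:ℝ) < α * h / 2),
          abs_of_pos (by positivity : (0:ℝ) < α / 2)]
        have := hnle1 n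
        nlinarith
      have hcoshpos : (0:ℝ) < Real.cosh (α * h / 2) := Real.cosh_pos _
      have hkey : 2 * (Real.cosh (α * h) - 1) ≤ α ^ 2 * Real.cosh (α / 2) ^ 2 * h ^ 2 := by
        rw [hch1]
        have hc2 : (0:ℝ) < Real.cosh (α / 2) := Real.cosh_pos _
        have hmm : α * h / 2 * Real.cosh (α * h / 2) ≤ α * h / 2 * Real.cosh (α / 2) :=
          mul_le_mul_of_nonneg_left hcc (by positivity)
        have hrpos : (0:ℝ) ≤ α * h / 2 * Real.cosh (α / 2) := by positivity
        have h1 : Real.sinh (α * h / 2) ^ 2 ≤ (α * h / 2 * Real.cosh (α / 2)) ^ 2 := by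
          apply sq_le_sq'
          · linarith
          · linarith
        nlinarith [h1]
      have hnneg : 0 ≤ 2 * (Real.cosh (α * h) - 1) := by
        have := Real.one_le_cosh (α * h)
        linarith
      rw [abs_mul, abs_div]
      rw [abs_of_nonneg hnneg, abs_of_pos (by positivity : (0:ℝ) < h ^ 2)]
      calc 2 * (Real.cosh (α * h) - 1) / h ^ 2 * |φ t|
          ≤ (α ^ 2 * Real.cosh (α / 2) ^ 2 * h ^ 2) / h ^ 2 * M0 := by
            have hd : 2 * (Real.cosh (α * h) - 1) / h ^ 2
                ≤ α ^ 2 * Real.cosh (α / 2) ^ 2 * h ^ 2 / h ^ 2 :=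
              (div_le_div_iff_of_pos_right (by positivity : (0:ℝ) < h ^ 2)).mpr hkey
            exact mul_le_mul hd (hM0 t) (abs_nonneg _) (by positivity)
        _ = α ^ 2 * Real.cosh (α / 2) ^ 2 * M0 := by
            rw [mul_div_assoc, div_self (by positivity : (h:ℝ) ^ 2 ≠ 0), mul_one]
      
    calc |(φ (t + h) + φ (t - h) - 2 * Real.cosh (α * h) * φ t) / h ^ 2|
        = |(φ (t + h) + φ (t - h) - 2 * φ t) / h ^ 2
            - 2 * (Real.cosh (α * h) - 1) / h ^ 2 * φ t| := by
          congr 1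
          field_simp [hhp.ne']
          ring
      _ ≤ |(φ (t + h) + φ (t - h) - 2 * φ t) / h ^ 2|
            + |2 * (Real.cosh (α * h) - 1) / h ^ 2 * φ t| := abs_sub _ _
      _ ≤ 5 * M2 + α ^ 2 * Real.cosh (α / 2) ^ 2 * M0 := add_le_add hsym hcosh
      _ = C := by rw [hC]
  -- Step 2c : pointwise convergence
  have hpt : ∀ t, Tendsto (fun n => G n t) atTop (𝓝 (F t * (φ'' t + K * φ t))) := by
    intro t
    have h1 := symm_tendsto hψ hψ' hφ''C t hnpos hnlim
    have h2 : Tendsto (fun n => 2 * (Real.cosh (α * hn n) - 1) / (hn n) ^ 2 * φ t) atTop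
        (𝓝 (α ^ 2 * φ t)) := (cosh_tendsto hαpos hnpos hnlim).mul_const _
    have h3 := h1.sub h2
    have h4 : Tendsto (fun n => F t * ((φ (t + hn n) + φ (t - hn n) - 2 * φ t) / (hn n) ^ 2
        - 2 * (Real.cosh (α * hn n) - 1) / (hn n) ^ 2 * φ t)) atTop
        (𝓝 (F t * (φ'' t - α ^ 2 * φ t))) := tendsto_const_nhds.mul h3
    have h5 : φ'' t - α ^ 2 * φ t = φ'' t + K * φ t := by
      rw [hα2]; ring
    rw [h5] at h4
    refine h4.congr fun n => ?_
    rw [hG]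
    congr 1
    have hne : (hn n) ^ 2 ≠ 0 := by have := hnpos n; positivity
    field_simp
    ring
  -- Step 2d : dominated convergence
  have hmeas : ∀ n, AEStronglyMeasurable (G n) volume := by
    intro n
    refine (hFi.aestronglyMeasurable.mul ?_)
    refine Continuous.aestronglyMeasurable ?_
    have c1 : Continuous fun t => φ (t + hn n) :=
      hφC.continuous.comp (continuous_id.add continuous_const)
    have c2 : Continuous fun t => φ (t - hn n) :=
      hφC.continuous.comp (continuous_id.sub continuous_const)
    exact ((c1.add c2).sub (continuous_const.mul hφC.continuous)).div_const _
  have hbint : Integrable (fun t => |F t| * C) := hFi.abs.mul_const C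
  have hdct := tendsto_integral_of_dominated_convergence (fun t => |F t| * C) hmeas hbint
    (fun n => Eventually.of_forall fun t => by
      rw [Real.norm_eq_abs]; exact hbound n t)
    (Eventually.of_forall hpt)
  have hlim_le : (∫ t, F t * (φ'' t + K * φ t)) ≤ 0 :=
    le_of_tendsto hdct (Eventually.of_forall hIneg)
  have hindeq : (fun t => F t * (φ'' t + K * φ t))
      = (Ioo a b).indicator (fun t => f t * (φ'' t + K * φ t)) := by
    funext t
    by_cases ht : t ∈ Ioo a b
    · rw [hF, Set.indicator_of_mem ht, Set.indicator_of_mem ht]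
    · rw [hF, Set.indicator_of_notMem ht, Set.indicator_of_notMem ht, zero_mul]
  rw [hindeq, integral_indicator measurableSet_Ioo] at hlim_le
  exact hlim_le


end Statement8Aux

/-- For `K < 0`, a nonnegative Lipschitz function `f` on `[a,b]` satisfies
`f'' + K f ≤ 0` in the distributional sense on `(a,b)` if and only if it satisfies the
`σ`-concavity inequality with coefficients `σ_K^{(s)}(θ) = sinh(s √(-K) θ)/sinh(√(-K) θ)`. -/
theorem statement_8 (K a b : ℝ) (hK : K < 0) (hab : a < b)
    (f : ℝ → ℝ) (hf : ∃ C : NNReal, LipschitzOnWith C f (Set.Icc a b))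
    (hnonneg : ∀ t ∈ Set.Icc a b, 0 ≤ f t) :
    (∀ φ : ℝ → ℝ, ContDiff ℝ (⊤ : ℕ∞) φ → HasCompactSupport φ →
        tsupport φ ⊆ Set.Ioo a b → (∀ t, 0 ≤ φ t) →
        ∫ t in Set.Ioo a b, f t * (deriv (deriv φ) t + K * φ t) ≤ 0)
      ↔
    (∀ t₀ ∈ Set.Icc a b, ∀ t₁ ∈ Set.Icc a b, t₀ ≠ t₁ → ∀ s ∈ Set.Icc (0 : ℝ) 1,
        Real.sinh ((1 - s) * (Real.sqrt (-K) * |t₁ - t₀|))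
            / Real.sinh (Real.sqrt (-K) * |t₁ - t₀|) * f t₀
          + Real.sinh (s * (Real.sqrt (-K) * |t₁ - t₀|))
            / Real.sinh (Real.sqrt (-K) * |t₁ - t₀|) * f t₁
          ≤ f ((1 - s) * t₀ + s * t₁)) := by
  obtain ⟨C, hlip⟩ := hf
  have fcont : ContinuousOn f (Set.Icc a b) := hlip.continuousOn
  constructor
  · intro hyp
    exact Statement8Aux.forward hK hab fcont hyp
  · intro hyp2
    exact Statement8Aux.mpr_dir hK hab fcont hnonneg hyp2
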